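/- Let E : ℝ → ℝ be twice continuously differentiable, satisfy the Kneser difference equation E(x+1) = Real.exp (E x) for all x ≥ 0, tend to +∞ as x → +∞, and suppose deriv E x > 0 and iteratedDeriv 2 E x > 0 for all sufficiently large x, together with Boshernitzan's bound for d = 2: iteratedDeriv 2 E x < E(x) · E(x−1)^6 for all sufficiently large x. Then E(x) · E''(x) / (E'(x))^2 → 1 as x → +∞, where E' = deriv E and E'' = iteratedDeriv 2 E; that is, E·E'' and (E')^2 have equivalent growth rates. -/

import Mathlib

open Filter

/-- `E * E''` and `(E')²` have equivalent growth rates: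
`E x * E'' x / (E' x)² → 1` as `x → +∞`. -/
theorem kneser_EEpp_div_Ep_sq_tendsto_one (E : ℝ → ℝ)
    (hE : ContDiff ℝ 2 E)
    (hK : ∀ x : ℝ, 0 ≤ x → E (x + 1) = Real.exp (E x))
    (htop : Tendsto E atTop atTop)
    (h1 : ∀ᶠ x : ℝ in atTop, 0 < deriv E x)
    (h2 : ∀ᶠ x : ℝ in atTop, 0 < iteratedDeriv 2 E x)
    (hbound : ∀ᶠ x : ℝ in atTop,
      iteratedDeriv 2 E x < E x * E (x - 1) ^ 6) :
    Tendsto (fun x : ℝ => E x * iteratedDeriv 2 E x / (deriv E x) ^ 2)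
      atTop (nhds 1) := by
  have hdE : Differentiable ℝ E := hE.differentiable (by norm_num)
  have h21 : (2 : WithTop ℕ∞) = 1 + 1 := by norm_num
  have hE1 : ContDiff ℝ 1 (deriv E) := by
    rw [h21, contDiff_succ_iff_deriv] at hE
    exact hE.2.2
  have hdE' : Differentiable ℝ (deriv E) := hE1.differentiable (by norm_num)
  -- first derivative recursion
  have D1 : ∀ x : ℝ, 0 < x → deriv E (x + 1) = E (x + 1) * deriv E x := by
    intro x hx
    have hshift : HasDerivAt (fun y : ℝ => E (y + 1)) (deriv E (x + 1)) x := by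
      simpa [Function.comp_def] using (hdE (x + 1)).hasDerivAt.comp x ((hasDerivAt_id x).add_const 1)
    have hexp : HasDerivAt (fun y : ℝ => Real.exp (E y))
        (Real.exp (E x) * deriv E x) x := (hdE x).hasDerivAt.exp
    have heq : (fun y : ℝ => Real.exp (E y)) =ᶠ[nhds x] fun y : ℝ => E (y + 1) := by
      filter_upwards [eventually_gt_nhds hx] with y hy
      exact (hK y hy.le).symm
    have := (hexp.congr_of_eventuallyEq heq.symm).unique hshift
    rw [← this, hK x hx.le]
  -- second derivative recursion
  have D2 : ∀ x : ℝ, 0 < x →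
      iteratedDeriv 2 E (x + 1) = E (x + 1) * ((deriv E x) ^ 2 + iteratedDeriv 2 E x) := by
    intro x hx
    have hit : ∀ y : ℝ, iteratedDeriv 2 E y = deriv (deriv E) y := by
      intro y
      rw [show (2 : ℕ) = 1 + 1 from rfl, iteratedDeriv_succ, iteratedDeriv_one]
    have hshift : HasDerivAt (fun y : ℝ => deriv E (y + 1)) (deriv (deriv E) (x + 1)) x := by
      simpa [Function.comp_def] using (hdE' (x + 1)).hasDerivAt.comp x ((hasDerivAt_id x).add_const 1)
    have hprod : HasDerivAt (fun y : ℝ => E (y + 1) * deriv E y)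
        (deriv E (x + 1) * deriv E x + E (x + 1) * deriv (deriv E) x) x := by
      have hA : HasDerivAt (fun y : ℝ => E (y + 1)) (deriv E (x + 1)) x := by
        simpa [Function.comp_def] using (hdE (x + 1)).hasDerivAt.comp x ((hasDerivAt_id x).add_const 1)
      exact hA.mul (hdE' x).hasDerivAt
    have heq : (fun y : ℝ => E (y + 1) * deriv E y) =ᶠ[nhds x]
        fun y : ℝ => deriv E (y + 1) := by
      filter_upwards [eventually_gt_nhds hx] with y hy
      exact (D1 y hy).symm
    have huniq := (hprod.congr_of_eventuallyEq heq.symm).unique hshift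
    rw [hit, ← huniq, D1 x hx, hit]
    ring
  -- a threshold beyond which everything is nice
  obtain ⟨A₀, hA₀⟩ := (h1.and (h2.and (hbound.and
      (htop.eventually (eventually_ge_atTop (1 : ℝ)))))).exists_forall_of_atTop
  set A : ℝ := max A₀ 1 with hAdef
  have hA1 : (1 : ℝ) ≤ A := le_max_right _ _
  have hfacts : ∀ x : ℝ, A ≤ x → 0 < deriv E x ∧ 0 < iteratedDeriv 2 E x ∧
      iteratedDeriv 2 E x < E x * E (x - 1) ^ 6 ∧ 1 ≤ E x := by
    intro x hx
    exact hA₀ x (le_trans (le_max_left _ _) hx)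
  have hApos : (0 : ℝ) < A := lt_of_lt_of_le one_pos hA1
  -- minimum of E' on [A, A+1]
  obtain ⟨x₀, hx₀mem, hx₀min⟩ := isCompact_Icc.exists_isMinOn
    (Set.nonempty_Icc.2 (by linarith)) hE1.continuous.continuousOn
    (f := deriv E) (s := Set.Icc A (A + 1))
  set m : ℝ := deriv E x₀ with hmdef
  have hmpos : 0 < m := (hfacts x₀ hx₀mem.1).1
  -- E' is at least m everywhere to the right of A
  have key : ∀ n : ℕ, ∀ x : ℝ, A ≤ x → x ≤ A + 1 + n → m ≤ deriv E x := by
    intro n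
    induction n with
    | zero =>
      intro x hx hx'
      exact hx₀min ⟨hx, by push_cast at hx'; linarith⟩
    | succ k ih =>
      intro x hx hx'
      by_cases hcase : x ≤ A + 1 + k
      · exact ih x hx hcase
      · push_neg at hcase
        have hx1A : A ≤ x - 1 := by
          have : (0 : ℝ) ≤ (k : ℝ) := Nat.cast_nonneg k
          linarith
        have hx1pos : 0 < x - 1 := by linarith
        have hrec := D1 (x - 1) hx1pos
        rw [sub_add_cancel] at hrec
        have hm1 : m ≤ deriv E (x - 1) := by
          apply ih (x - 1) hx1A
          push_cast at hx' ⊢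
          linarith
        have hEx : 1 ≤ E x := (hfacts x hx).2.2.2
        rw [hrec]
        nlinarith
  have hm : ∀ x : ℝ, A ≤ x → m ≤ deriv E x := by
    intro x hx
    refine key ⌈x - A⌉₊ x hx ?_
    have := Nat.le_ceil (x - A)
    linarith
  -- product lower bound on E'
  have hprod : ∀ x : ℝ, A + 5 ≤ x →
      m * (E x * E (x - 1) * E (x - 2) * E (x - 3)) ≤ deriv E x := by
    intro x hx
    have e1 := D1 (x - 1) (by linarith)
    have e2 := D1 (x - 2) (by linarith)
    have e3 := D1 (x - 3) (by linarith)
    have e4 := D1 (x - 4) (by linarith)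
    rw [sub_add_cancel] at e1
    rw [show x - 2 + 1 = x - 1 by ring] at e2
    rw [show x - 3 + 1 = x - 2 by ring] at e3
    rw [show x - 4 + 1 = x - 3 by ring] at e4
    have hm4 : m ≤ deriv E (x - 4) := hm (x - 4) (by linarith)
    have hE1x : 1 ≤ E x := (hfacts x (by linarith)).2.2.2
    have hE1x1 : 1 ≤ E (x - 1) := (hfacts (x - 1) (by linarith)).2.2.2
    have hE1x2 : 1 ≤ E (x - 2) := (hfacts (x - 2) (by linarith)).2.2.2
    have hE1x3 : 1 ≤ E (x - 3) := (hfacts (x - 3) (by linarith)).2.2.2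
    rw [e1, e2, e3, e4]
    have hab : (1 : ℝ) ≤ E x * E (x - 1) := by nlinarith
    have hcd' : (1 : ℝ) ≤ E (x - 2) * E (x - 3) := by nlinarith
    have hP : (0 : ℝ) ≤ E x * E (x - 1) * E (x - 2) * E (x - 3) := by nlinarith [hab, hcd']
    nlinarith [mul_le_mul_of_nonneg_left hm4 hP]
  -- main ratio bound
  have key2 : ∀ x : ℝ, A + 5 ≤ x →
      iteratedDeriv 2 E x / (deriv E x) ^ 2 ≤ E (x - 1) ^ 4 / (m ^ 2 * E x) := by
    intro x hx
    have hxA : A ≤ x := by linarith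
    obtain ⟨hp, hq, hb, hEx⟩ := hfacts x hxA
    have hE1x1 : 1 ≤ E (x - 1) := (hfacts (x - 1) (by linarith)).2.2.2
    have hE1x2 : 1 ≤ E (x - 2) := (hfacts (x - 2) (by linarith)).2.2.2
    have hE1x3 : 1 ≤ E (x - 3) := (hfacts (x - 3) (by linarith)).2.2.2
    have hpl := hprod x hx
    rw [div_le_div_iff₀ (by positivity) (by positivity)]
    have hab : (1 : ℝ) ≤ E x * E (x - 1) := by nlinarith
    have hcd' : (1 : ℝ) ≤ E (x - 2) * E (x - 3) := by nlinarith
    have hPnn : (0 : ℝ) ≤ E x * E (x - 1) * E (x - 2) * E (x - 3) := by nlinarith [hab, hcd']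
    have hPpos : (0 : ℝ) ≤ m * (E x * E (x - 1) * E (x - 2) * E (x - 3)) :=
      mul_nonneg hmpos.le hPnn
    have hsq : (m * (E x * E (x - 1) * E (x - 2) * E (x - 3))) ^ 2 ≤ (deriv E x) ^ 2 :=
      pow_le_pow_left₀ hPpos hpl 2
    have hm2a : (0 : ℝ) ≤ m ^ 2 * E x := mul_nonneg (sq_nonneg m) (by linarith)
    have hint2 := mul_le_mul_of_nonneg_left hb.le hm2a
    have hcd : (1 : ℝ) ≤ E (x - 2) ^ 2 * E (x - 3) ^ 2 := by nlinarith
    have hbase : (0 : ℝ) ≤ m ^ 2 * E x ^ 2 * E (x - 1) ^ 6 := by positivity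
    have hint3 := mul_le_mul_of_nonneg_left hcd hbase
    have hb4 : (0 : ℝ) ≤ E (x - 1) ^ 4 := by positivity
    have hint1 := mul_le_mul_of_nonneg_left hsq hb4
    linarith [hint1, hint2, hint3]
  -- the upper bound tends to zero
  have hG : Tendsto (fun x : ℝ => E (x - 2) ^ 4 / (m ^ 2 * E (x - 1))) atTop (nhds 0) := by
    have hcomp : Tendsto (fun x : ℝ => E (x - 2)) atTop atTop :=
      htop.comp (tendsto_atTop_add_const_right atTop (-2) tendsto_id)
    have h0 : Tendsto (fun t : ℝ => t ^ 4 * Real.exp (-t)) atTop (nhds 0) :=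
      Real.tendsto_pow_mul_exp_neg_atTop_nhds_zero 4
    have hmain : Tendsto (fun x : ℝ => (1 / m ^ 2) *
        (E (x - 2) ^ 4 * Real.exp (-(E (x - 2))))) atTop (nhds 0) := by
      simpa using tendsto_const_nhds.mul (h0.comp hcomp)
    refine hmain.congr' ?_
    filter_upwards [eventually_ge_atTop (2 : ℝ)] with x hx
    have hEeq : E (x - 1) = Real.exp (E (x - 2)) := by
      have := hK (x - 2) (by linarith)
      rwa [show x - 2 + 1 = x - 1 by ring] at this
    rw [hEeq, Real.exp_neg]
    have := Real.exp_pos (E (x - 2))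
    field_simp
  -- the shifted ratio tends to zero
  have hf0 : Tendsto (fun x : ℝ => iteratedDeriv 2 E (x - 1) / (deriv E (x - 1)) ^ 2)
      atTop (nhds 0) := by
    apply squeeze_zero' (g := fun x : ℝ => E (x - 2) ^ 4 / (m ^ 2 * E (x - 1)))
    · filter_upwards [eventually_ge_atTop (A + 1)] with x hx
      have h := hfacts (x - 1) (by linarith)
      exact div_nonneg h.2.1.le (sq_nonneg _)
    · filter_upwards [eventually_ge_atTop (A + 6)] with x hx
      have := key2 (x - 1) (by linarith)
      rwa [show x - 1 - 1 = x - 2 by ring] at this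
    · exact hG
  have hfin : Tendsto (fun x : ℝ => 1 + iteratedDeriv 2 E (x - 1) / (deriv E (x - 1)) ^ 2)
      atTop (nhds 1) := by
    simpa using tendsto_const_nhds.add hf0
  refine hfin.congr' ?_
  filter_upwards [eventually_ge_atTop (A + 1)] with x hx
  have hx1pos : 0 < x - 1 := by linarith
  have e1 := D1 (x - 1) hx1pos
  have e2 := D2 (x - 1) hx1pos
  rw [sub_add_cancel] at e1 e2
  obtain ⟨hp1, hq1, _, hE1⟩ := hfacts (x - 1) (by linarith)
  have hExpos : (0 : ℝ) < E x := lt_of_lt_of_le one_pos (hfacts x (by linarith)).2.2.2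
  rw [e1, e2]
  field_simp
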